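/- Let p > −1/2 and define the relation ≃ on 𝒫ₚ by: (P,ψ) ≃ (P̃,ψ̃) iff κ₁^{−2/(1+2p)}·det P = κ̃₁^{−2/(1+2p)}·det P̃ and κ₁^{2p/(1+2p)}·ψ − κ̃₁^{2p/(1+2p)}·ψ̃ = 2p·(κ₁^{−1/(1+2p)}·κ₃ − κ̃₁^{−1/(1+2p)}·κ̃₃), where P = [[κ₁,κ₃],[κ₃,κ₂]] and P̃ = [[κ̃₁,κ̃₃],[κ̃₃,κ̃₂]]. Then: (i) the set {(P,ψ) ∈ 𝒫ₚ : κ₃ = 0 and κ₁ = 1} is a complete system of representatives of 𝒫ₚ modulo ≃, i.e. every (P,ψ) ∈ 𝒫ₚ is ≃-equivalent to exactly one element of this set; (ii) if p ≠ 0, the set {(P,ψ) ∈ 𝒫ₚ : ψ = 0 and κ₁ = 1} is likewise a complete system of representatives of 𝒫ₚ modulo ≃. -/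

import Mathlib

open Matrix MeasureTheory Filter

noncomputable section

def matJ : Matrix (Fin 2) (Fin 2) ℝ := !![0, -1; 1, 0]

def Dpsi (p ψ a : ℝ) : Matrix (Fin 2) (Fin 2) ℝ :=
  if p = 0 then !![1, 0; ψ * Real.log a, 1]
  else !![1, 0; ψ / (2 * p), 1] * !![a ^ p, 0; 0, a ^ (-p)] * !![1, 0; -ψ / (2 * p), 1]

def HPpsi (p ψ : ℝ) (P : Matrix (Fin 2) (Fin 2) ℝ) (a : ℝ) : Matrix (Fin 2) (Fin 2) ℝ :=
  Dpsi p ψ a * P * (Dpsi p ψ a)ᵀ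

def SatRec (p : ℝ) (P : Matrix (Fin 2) (Fin 2) ℝ) (ψ : ℝ) (α β : ℕ → ℝ) : Prop :=
  α 0 = 1 ∧ β 0 = 0 ∧ ∀ n : ℕ,
    !![α (n + 1), β (n + 1)] =
      (-1 / (((n : ℝ) + 1) * (2 * p + (n : ℝ) + 1))) •
        (!![α n, β n] * (P * matJ * !![2 * p + (n : ℝ) + 1, 0; ψ, (n : ℝ) + 1]))

def genF (c : ℕ → ℝ) (z : ℂ) : ℂ := ∑' n : ℕ, (c n : ℂ) * z ^ n

def rowAB (p ψ : ℝ) (α β : ℕ → ℝ) (a : ℝ) (z : ℂ) : Matrix (Fin 1) (Fin 2) ℂ :=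
  !![((a ^ p : ℝ) : ℂ) * genF α ((a : ℂ) * z), ((a ^ p : ℝ) : ℂ) * genF β ((a : ℂ) * z)] *
    ((Dpsi p ψ a)⁻¹).map Complex.ofReal

/-- The parameter class 𝒫ₚ. -/
def PClass (p : ℝ) (P : Matrix (Fin 2) (Fin 2) ℝ) (ψ : ℝ) : Prop :=
  P.PosSemidef ∧
    ((p ≠ 0 ∧ P.mulVec ![1, 0] ≠ 0 ∧ P.mulVec ![-ψ, 2 * p] ≠ 0) ∨
     (p = 0 ∧ ((LinearMap.ker P.mulVecLin = ⊥ ∧ ψ = 0) ∨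
               (P.mulVec ![1, 0] ≠ 0 ∧ ψ ≠ 0))))
/-- The relation ≃ on 𝒫ₚ (equality of the induced measures). -/
def simRel (p : ℝ) (Pψ Qφ : Matrix (Fin 2) (Fin 2) ℝ × ℝ) : Prop :=
  (Pψ.1 0 0) ^ (-2 / (1 + 2 * p)) * Pψ.1.det =
    (Qφ.1 0 0) ^ (-2 / (1 + 2 * p)) * Qφ.1.det ∧
  (Pψ.1 0 0) ^ (2 * p / (1 + 2 * p)) * Pψ.2 -
      (Qφ.1 0 0) ^ (2 * p / (1 + 2 * p)) * Qφ.2 =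
    2 * p * ((Pψ.1 0 0) ^ (-1 / (1 + 2 * p)) * Pψ.1 0 1 -
      (Qφ.1 0 0) ^ (-1 / (1 + 2 * p)) * Qφ.1 0 1)

lemma quad2 (P : Matrix (Fin 2) (Fin 2) ℝ) (x0 x1 : ℝ) :
    star ![x0, x1] ⬝ᵥ P.mulVec ![x0, x1]
      = P 0 0 * x0^2 + (P 0 1 + P 1 0) * x0 * x1 + P 1 1 * x1^2 := by
  simp [Matrix.mulVec, dotProduct, Fin.sum_univ_two]; ring

lemma psd_sym {P : Matrix (Fin 2) (Fin 2) ℝ} (hP : P.PosSemidef) : P 1 0 = P 0 1 := by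
  simpa using hP.1.apply 0 1

lemma psd_00 {P : Matrix (Fin 2) (Fin 2) ℝ} (hP : P.PosSemidef) : 0 ≤ P 0 0 := by
  have := hP.dotProduct_mulVec_nonneg ![1, 0]
  rw [quad2] at this; linarith [this]

lemma psd_det {P : Matrix (Fin 2) (Fin 2) ℝ} (hP : P.PosSemidef) : 0 ≤ P.det := by
  rw [Matrix.det_fin_two]
  rcases eq_or_lt_of_le (psd_00 hP) with h0 | h0
  · have h3 : P 0 1 = 0 := by
      by_contra h3
      have hq := hP.dotProduct_mulVec_nonneg ![(-(P 1 1) - 1)/(2 * P 0 1), 1]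
      rw [quad2, psd_sym hP, ← h0] at hq
      have key : (P 0 1 + P 0 1) * ((-(P 1 1) - 1)/(2 * P 0 1)) = -(P 1 1) - 1 := by
        field_simp; ring
      nlinarith [hq, key]
    rw [psd_sym hP, h3, ← h0]; norm_num
  · rw [psd_sym hP]
    have hq := hP.dotProduct_mulVec_nonneg ![P 0 1, -(P 0 0)]
    rw [quad2, psd_sym hP] at hq
    have h2 : P 0 0 * 0 ≤ P 0 0 * (P 0 0 * P 1 1 - P 0 1 * P 0 1) := by nlinarith [hq]
    have := le_of_mul_le_mul_left h2 h0
    linarith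

lemma mulVec2 (P : Matrix (Fin 2) (Fin 2) ℝ) (v0 v1 : ℝ) :
    P.mulVec ![v0, v1] = ![P 0 0 * v0 + P 0 1 * v1, P 1 0 * v0 + P 1 1 * v1] := by
  funext i; fin_cases i <;> simp [Matrix.mulVec, dotProduct, Fin.sum_univ_two]

lemma keyND {p ψ : ℝ} {P : Matrix (Fin 2) (Fin 2) ℝ} (hsym : P 1 0 = P 0 1)
    (hk : P 0 0 ≠ 0) (hne : P.mulVec ![-ψ, 2*p] ≠ 0) (hd : P.det = 0) :
    2*p*(P 0 1) - P 0 0 * ψ ≠ 0 := by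
  intro h0
  apply hne
  rw [Matrix.det_fin_two] at hd
  rw [mulVec2]
  have c1 : P 0 0 * (-ψ) + P 0 1 * (2*p) = 0 := by linarith
  have c2 : P 1 0 * (-ψ) + P 1 1 * (2*p) = 0 := by
    have key : P 0 0 * (P 1 0 * (-ψ) + P 1 1 * (2*p)) = 0 := by
      rw [hsym] at hd ⊢; linear_combination P 0 1 * h0 + 2*p*hd
    rcases mul_eq_zero.mp key with h | h
    · exact absurd h hk
    · exact h
  rw [c1, c2]
  funext i; fin_cases i <;> rfl

lemma pclass_pos {p ψ : ℝ} {P : Matrix (Fin 2) (Fin 2) ℝ} (hP : PClass p P ψ) :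
    0 < P 0 0 := by
  obtain ⟨hpsd, hcase⟩ := hP
  rcases eq_or_lt_of_le (psd_00 hpsd) with h0 | h0
  · exfalso
    have hdet := psd_det hpsd
    rw [Matrix.det_fin_two, psd_sym hpsd, ← h0] at hdet
    have h3 : P 0 1 = 0 := by nlinarith [hdet]
    have hmv : P.mulVec ![1, 0] = 0 := by
      rw [mulVec2, psd_sym hpsd, h3, ← h0]
      funext i; fin_cases i <;> simp
    rcases hcase with ⟨_, hv1, _⟩ | ⟨_, ⟨hker, _⟩ | ⟨hv1, _⟩⟩
    · exact hv1 hmv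
    · have hmem : (![1, 0] : Fin 2 → ℝ) ∈ LinearMap.ker P.mulVecLin := by
        rw [LinearMap.mem_ker, Matrix.mulVecLin_apply, hmv]
      rw [hker, Submodule.mem_bot] at hmem
      have := congrFun hmem 0
      simp at this
    · exact hv1 hmv
  · exact h0

lemma det_ne_of_ker {P : Matrix (Fin 2) (Fin 2) ℝ} (hsym : P 1 0 = P 0 1)
    (hk : P 0 0 ≠ 0) (hker : LinearMap.ker P.mulVecLin = ⊥) : P.det ≠ 0 := by
  intro hd
  rw [Matrix.det_fin_two, hsym] at hd
  have hv : P.mulVecLin ![P 0 1, -(P 0 0)] = 0 := by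
    rw [Matrix.mulVecLin_apply, mulVec2, hsym]
    funext i; fin_cases i <;> simp <;> linarith
  have hmem : (![P 0 1, -(P 0 0)] : Fin 2 → ℝ) ∈ LinearMap.ker P.mulVecLin :=
    LinearMap.mem_ker.mpr hv
  rw [hker, Submodule.mem_bot] at hmem
  have := congrFun hmem 1
  simp at this
  exact hk this

lemma kerQ {d : ℝ} (hd : d ≠ 0) :
    LinearMap.ker (!![1, 0; 0, d] : Matrix (Fin 2) (Fin 2) ℝ).mulVecLin = ⊥ := by
  rw [LinearMap.ker_eq_bot']
  intro v hv
  rw [Matrix.mulVecLin_apply] at hv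
  have h0 := congrFun hv 0
  have h1 := congrFun hv 1
  simp [Matrix.mulVec, dotProduct, Fin.sum_univ_two] at h0 h1
  funext i; fin_cases i
  · simpa using h0
  · simpa using h1.resolve_left hd

lemma psd2 {t c : ℝ} (h : 0 ≤ c - t^2) :
    (!![1, t; t, c] : Matrix (Fin 2) (Fin 2) ℝ).PosSemidef := by
  rw [Matrix.posSemidef_iff_dotProduct_mulVec]
  constructor
  · ext i j
    fin_cases i <;> fin_cases j <;> simp [Matrix.conjTranspose_apply]
  · intro x
    have hx : x = ![x 0, x 1] := by funext i; fin_cases i <;> rfl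
    rw [hx, quad2]
    have he : (!![1, t; t, c] : Matrix (Fin 2) (Fin 2) ℝ) 0 0 * (x 0)^2 +
        ((!![1, t; t, c] : Matrix (Fin 2) (Fin 2) ℝ) 0 1 + !![1, t; t, c] 1 0) * x 0 * x 1 +
        (!![1, t; t, c] : Matrix (Fin 2) (Fin 2) ℝ) 1 1 * (x 1)^2
        = (x 0 + t * x 1)^2 + (c - t^2) * (x 1)^2 := by
      simp; ring
    rw [he]; positivity

lemma part_i (p : ℝ) (hp : -(1/2 : ℝ) < p) :
    ∀ P : Matrix (Fin 2) (Fin 2) ℝ, ∀ ψ : ℝ, PClass p P ψ →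
      ∃! Qφ : Matrix (Fin 2) (Fin 2) ℝ × ℝ,
        (PClass p Qφ.1 Qφ.2 ∧ Qφ.1 0 1 = 0 ∧ Qφ.1 0 0 = 1) ∧ simRel p (P, ψ) Qφ := by
  have h2p : (0:ℝ) < 1 + 2 * p := by linarith
  intro P ψ hP
  have hk : 0 < P 0 0 := pclass_pos hP
  obtain ⟨hpsd, hcase⟩ := hP
  have hsym := psd_sym hpsd
  have hE2 : 0 < P 0 0 ^ (-2 / (1 + 2 * p)) := Real.rpow_pos_of_pos hk _
  have hE1 : 0 < P 0 0 ^ (-1 / (1 + 2 * p)) := Real.rpow_pos_of_pos hk _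
  have hEp : P 0 0 ^ (2 * p / (1 + 2 * p)) = P 0 0 * P 0 0 ^ (-1 / (1 + 2 * p)) := by
    rw [show 2 * p / (1 + 2 * p) = 1 + -1 / (1 + 2 * p) by field_simp; ring,
      Real.rpow_add hk, Real.rpow_one]
  set d : ℝ := P 0 0 ^ (-2 / (1 + 2 * p)) * P.det with hd_def
  have hd0 : 0 ≤ d := mul_nonneg hE2.le (psd_det hpsd)
  set u : ℝ := P 0 0 ^ (2 * p / (1 + 2 * p)) * ψ
    - 2 * p * (P 0 0 ^ (-1 / (1 + 2 * p)) * P 0 1) with hu_def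
  have hdumper : d = 0 → P.det = 0 := by
    intro h
    rcases mul_eq_zero.mp (hd_def ▸ h) with h' | h'
    · exact absurd h' hE2.ne'
    · exact h'
  have hQpsd : (!![1, 0; 0, d] : Matrix (Fin 2) (Fin 2) ℝ).PosSemidef :=
    psd2 (by simpa using hd0)
  refine ⟨(!![1, 0; 0, d], u), ⟨⟨⟨hQpsd, ?_⟩, by simp, by simp⟩, ?_, ?_⟩, ?_⟩
  · -- nondegeneracy conditions for the representative
    rcases hcase with ⟨hp0, hv1, hv2⟩ | ⟨hp0, hsub⟩
    · left
      refine ⟨hp0, ?_, ?_⟩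
      · intro h
        have := congrFun h 0
        simp [Matrix.mulVec, dotProduct, Fin.sum_univ_two] at this
      · by_cases hdd : d = 0
        · have hu0 : u ≠ 0 := by
            have hnd := keyND hsym hk.ne' hv2 (hdumper hdd)
            rw [hu_def, hEp]
            intro h
            apply hnd
            have h' : P 0 0 ^ (-1 / (1 + 2 * p)) * (2 * p * P 0 1 - P 0 0 * ψ) = 0 := by
              linear_combination -h
            rcases mul_eq_zero.mp h' with h'' | h''
            · exact absurd h'' hE1.ne'
            · exact h''
          intro h
          have := congrFun h 0
          simp [Matrix.mulVec, dotProduct, Fin.sum_univ_two] at this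
          exact hu0 (by linarith)
        · intro h
          have := congrFun h 1
          simp [Matrix.mulVec, dotProduct, Fin.sum_univ_two] at this
          rcases this with h' | h'
          · exact hdd h'
          · exact hp0 (by linarith)
    · right
      refine ⟨hp0, ?_⟩
      have hu_eq : u = ψ := by
        rw [hu_def, hp0]; norm_num
      rcases hsub with ⟨hker, hψ⟩ | ⟨hv1, hψ⟩
      · left
        refine ⟨kerQ ?_, by rw [hu_eq, hψ]⟩
        intro h
        exact det_ne_of_ker hsym hk.ne' hker (hdumper h)
      · right
        refine ⟨?_, by rw [hu_eq]; exact hψ⟩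
        intro h
        have := congrFun h 0
        simp [Matrix.mulVec, dotProduct, Fin.sum_univ_two] at this
  · -- simRel first component
    show P 0 0 ^ (-2 / (1 + 2 * p)) * P.det
        = (!![1, 0; 0, d] : Matrix (Fin 2) (Fin 2) ℝ) 0 0 ^ (-2 / (1 + 2 * p))
          * (!![1, 0; 0, d] : Matrix (Fin 2) (Fin 2) ℝ).det
    simp [Matrix.det_fin_two_of, Real.one_rpow]
    rfl
  · -- simRel second component
    show P 0 0 ^ (2 * p / (1 + 2 * p)) * ψ
        - (!![1, 0; 0, d] : Matrix (Fin 2) (Fin 2) ℝ) 0 0 ^ (2 * p / (1 + 2 * p)) * u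
      = 2 * p * (P 0 0 ^ (-1 / (1 + 2 * p)) * P 0 1
        - (!![1, 0; 0, d] : Matrix (Fin 2) (Fin 2) ℝ) 0 0 ^ (-1 / (1 + 2 * p))
          * (!![1, 0; 0, d] : Matrix (Fin 2) (Fin 2) ℝ) 0 1)
    simp [Real.one_rpow, hu_def]
  · -- uniqueness
    rintro ⟨Q, φ⟩ ⟨⟨⟨hQpsd', _⟩, hQ01, hQ00⟩, hsim⟩
    simp only at hQ01 hQ00
    have hs1 : P 0 0 ^ (-2 / (1 + 2 * p)) * P.det
        = Q 0 0 ^ (-2 / (1 + 2 * p)) * Q.det := hsim.1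
    have hs2 : P 0 0 ^ (2 * p / (1 + 2 * p)) * ψ - Q 0 0 ^ (2 * p / (1 + 2 * p)) * φ
        = 2 * p * (P 0 0 ^ (-1 / (1 + 2 * p)) * P 0 1
          - Q 0 0 ^ (-1 / (1 + 2 * p)) * Q 0 1) := hsim.2
    have hQ10 : Q 1 0 = 0 := (psd_sym hQpsd').trans hQ01
    rw [hQ00, Real.one_rpow, one_mul, Matrix.det_fin_two Q, hQ00, hQ01, hQ10] at hs1
    have hQ11 : Q 1 1 = d := by
      rw [hd_def]; linarith [hs1]
    have hφ : φ = u := by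
      rw [hQ00, Real.one_rpow, hQ01] at hs2
      rw [hu_def]; linarith [hs2]
    have hQ : Q = !![1, 0; 0, d] := by
      rw [Matrix.eta_fin_two Q, hQ00, hQ01, hQ10, hQ11]
    rw [hQ, hφ]

lemma part_ii (p : ℝ) (hp : -(1/2 : ℝ) < p) (hpne : p ≠ 0) :
    ∀ P : Matrix (Fin 2) (Fin 2) ℝ, ∀ ψ : ℝ, PClass p P ψ →
      ∃! Qφ : Matrix (Fin 2) (Fin 2) ℝ × ℝ,
        (PClass p Qφ.1 Qφ.2 ∧ Qφ.2 = 0 ∧ Qφ.1 0 0 = 1) ∧ simRel p (P, ψ) Qφ := by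
  have h2p : (0:ℝ) < 1 + 2 * p := by linarith
  have h2p0 : (2:ℝ) * p ≠ 0 := by
    intro h; exact hpne (by linarith)
  intro P ψ hP
  have hk : 0 < P 0 0 := pclass_pos hP
  obtain ⟨hpsd, hcase⟩ := hP
  rcases hcase with ⟨_, hv1, hv2⟩ | ⟨hp0', _⟩
  swap
  · exact absurd hp0' hpne
  have hsym := psd_sym hpsd
  have hE2 : 0 < P 0 0 ^ (-2 / (1 + 2 * p)) := Real.rpow_pos_of_pos hk _
  have hE1 : 0 < P 0 0 ^ (-1 / (1 + 2 * p)) := Real.rpow_pos_of_pos hk _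
  have hEp : P 0 0 ^ (2 * p / (1 + 2 * p)) = P 0 0 * P 0 0 ^ (-1 / (1 + 2 * p)) := by
    rw [show 2 * p / (1 + 2 * p) = 1 + -1 / (1 + 2 * p) by field_simp; ring,
      Real.rpow_add hk, Real.rpow_one]
  set d : ℝ := P 0 0 ^ (-2 / (1 + 2 * p)) * P.det with hd_def
  have hd0 : 0 ≤ d := mul_nonneg hE2.le (psd_det hpsd)
  set t : ℝ := P 0 0 ^ (-1 / (1 + 2 * p)) * P 0 1
    - P 0 0 ^ (2 * p / (1 + 2 * p)) * ψ / (2 * p) with ht_def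
  have hdumper : d = 0 → P.det = 0 := by
    intro h
    rcases mul_eq_zero.mp (hd_def ▸ h) with h' | h'
    · exact absurd h' hE2.ne'
    · exact h'
  have hQpsd : (!![1, t; t, d + t^2] : Matrix (Fin 2) (Fin 2) ℝ).PosSemidef :=
    psd2 (by linarith : (0:ℝ) ≤ d + t^2 - t^2)
  refine ⟨(!![1, t; t, d + t^2], 0), ⟨⟨⟨hQpsd, ?_⟩, rfl, by simp⟩, ?_, ?_⟩, ?_⟩
  · -- nondegeneracy
    left
    refine ⟨hpne, ?_, ?_⟩
    · intro h
      have := congrFun h 0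
      simp [Matrix.mulVec, dotProduct, Fin.sum_univ_two] at this
    · by_cases ht : t = 0
      · -- then 2pκ₃ = κ₁ψ, so det P ≠ 0
        have hrel : 2 * p * P 0 1 - P 0 0 * ψ = 0 := by
          have h1 : P 0 0 ^ (-1 / (1 + 2 * p)) * (2 * p * P 0 1 - P 0 0 * ψ)
              = t * (2 * p) := by
            rw [ht_def, hEp]; field_simp
          rw [ht, zero_mul] at h1
          rcases mul_eq_zero.mp h1 with h'' | h''
          · exact absurd h'' hE1.ne'
          · exact h''
        have hdet_ne : P.det ≠ 0 := fun h => keyND hsym hk.ne' hv2 h hrel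
        have hdne : d ≠ 0 := fun h => hdet_ne (hdumper h)
        intro h
        have := congrFun h 1
        simp [Matrix.mulVec, dotProduct, Fin.sum_univ_two, ht] at this
        rcases this with h' | h'
        · exact hdne h'
        · exact hpne (by linarith)
      · intro h
        have := congrFun h 0
        simp [Matrix.mulVec, dotProduct, Fin.sum_univ_two] at this
        rcases this with h' | h'
        · exact ht h'
        · exact hpne (by linarith)
  · -- simRel first
    show P 0 0 ^ (-2 / (1 + 2 * p)) * P.det
        = (!![1, t; t, d + t^2] : Matrix (Fin 2) (Fin 2) ℝ) 0 0 ^ (-2 / (1 + 2 * p))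
          * (!![1, t; t, d + t^2] : Matrix (Fin 2) (Fin 2) ℝ).det
    simp [Matrix.det_fin_two_of, Real.one_rpow]
    ring
  · -- simRel second
    show P 0 0 ^ (2 * p / (1 + 2 * p)) * ψ
        - (!![1, t; t, d + t^2] : Matrix (Fin 2) (Fin 2) ℝ) 0 0 ^ (2 * p / (1 + 2 * p)) * 0
      = 2 * p * (P 0 0 ^ (-1 / (1 + 2 * p)) * P 0 1
        - (!![1, t; t, d + t^2] : Matrix (Fin 2) (Fin 2) ℝ) 0 0 ^ (-1 / (1 + 2 * p))
          * (!![1, t; t, d + t^2] : Matrix (Fin 2) (Fin 2) ℝ) 0 1)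
    simp only [Real.one_rpow, ht_def]
    field_simp
    simp [neg_div]
    field_simp
    ring
  · -- uniqueness
    rintro ⟨Q, φ⟩ ⟨⟨⟨hQpsd', _⟩, hφ0, hQ00⟩, hsim⟩
    simp only at hφ0 hQ00
    have hs1 : P 0 0 ^ (-2 / (1 + 2 * p)) * P.det
        = Q 0 0 ^ (-2 / (1 + 2 * p)) * Q.det := hsim.1
    have hs2 : P 0 0 ^ (2 * p / (1 + 2 * p)) * ψ - Q 0 0 ^ (2 * p / (1 + 2 * p)) * φ
        = 2 * p * (P 0 0 ^ (-1 / (1 + 2 * p)) * P 0 1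
          - Q 0 0 ^ (-1 / (1 + 2 * p)) * Q 0 1) := hsim.2
    rw [hQ00, hφ0, mul_zero, sub_zero, Real.one_rpow, one_mul] at hs2
    have hQ01 : Q 0 1 = t := by
      have : 2 * p * Q 0 1 = 2 * p * t := by
        rw [ht_def]; field_simp; rw [neg_div] at hs2; linarith [hs2]
      exact mul_left_cancel₀ h2p0 this
    have hQ10 : Q 1 0 = t := (psd_sym hQpsd').trans hQ01
    rw [hQ00, Real.one_rpow, one_mul, Matrix.det_fin_two Q, hQ00, hQ01, hQ10] at hs1
    have hQ11 : Q 1 1 = d + t^2 := by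
      rw [hd_def]; nlinarith [hs1]
    have hQ : Q = !![1, t; t, d + t^2] := by
      rw [Matrix.eta_fin_two Q, hQ00, hQ01, hQ10, hQ11]
    rw [hQ, hφ0]

/-- complete systems of representatives of 𝒫ₚ modulo ≃. -/
theorem statement19 (p : ℝ) (hp : -(1/2 : ℝ) < p) :
    (∀ P : Matrix (Fin 2) (Fin 2) ℝ, ∀ ψ : ℝ, PClass p P ψ →
      ∃! Qφ : Matrix (Fin 2) (Fin 2) ℝ × ℝ,
        (PClass p Qφ.1 Qφ.2 ∧ Qφ.1 0 1 = 0 ∧ Qφ.1 0 0 = 1) ∧ simRel p (P, ψ) Qφ) ∧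
    (p ≠ 0 →
      ∀ P : Matrix (Fin 2) (Fin 2) ℝ, ∀ ψ : ℝ, PClass p P ψ →
        ∃! Qφ : Matrix (Fin 2) (Fin 2) ℝ × ℝ,
          (PClass p Qφ.1 Qφ.2 ∧ Qφ.2 = 0 ∧ Qφ.1 0 0 = 1) ∧ simRel p (P, ψ) Qφ) :=
  ⟨part_i p hp, fun hpne => part_ii p hp hpne⟩
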